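/- Let k ≥ 1 be an integer and let G be an edge-colored graph containing no cycle of length 4, with average color degree d̂(G) ≥ 2k. Then G contains a rainbow matching of size k. -/

import Mathlib

/-- The color degree of a vertex `v`: the number of distinct colors appearing
on edges of `G` incident to `v`. -/
noncomputable def colorDegree {V : Type*} (G : SimpleGraph V) (c : Sym2 V → ℕ) (v : V) : ℕ :=
  (c '' {e : Sym2 V | e ∈ G.edgeSet ∧ v ∈ e}).ncard

/-- `M` is a rainbow matching in the edge-colored graph `(G, c)`:
a set of edges of `G`, pairwise vertex-disjoint, with pairwise distinct colors. -/
def IsRainbowMatching {V : Type*} (G : SimpleGraph V) (c : Sym2 V → ℕ)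
    (M : Finset (Sym2 V)) : Prop :=
  ↑M ⊆ G.edgeSet ∧
  (∀ e ∈ M, ∀ f ∈ M, e ≠ f → ∀ v : V, v ∈ e → v ∉ f) ∧
  Set.InjOn c ↑M

set_option linter.unusedSectionVars false
set_option maxHeartbeats 1000000

universe u

namespace RainbowMatchingAux

open Finset

section Helpers

variable {V : Type*} [Fintype V] [DecidableEq V]




lemma colorDegree_eq (G : SimpleGraph V) [DecidableRel G.Adj] (c : Sym2 V → ℕ) (v : V) :
    colorDegree G c v = ((G.incidenceFinset v).image c).card := by
  have h1 : {e : Sym2 V | e ∈ G.edgeSet ∧ v ∈ e} = G.incidenceSet v := rfl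
  rw [colorDegree, h1]
  have h2 : (G.incidenceSet v) = ↑(G.incidenceFinset v) := by
    simp [SimpleGraph.incidenceFinset]
  rw [h2, ← Finset.coe_image, Set.ncard_coe_finset]

lemma mem_palette {G : SimpleGraph V} [DecidableRel G.Adj] {c : Sym2 V → ℕ} {v : V} {b : ℕ}
    (hb : b ∈ (G.incidenceFinset v).image c) :
    ∃ w, G.Adj v w ∧ b = c s(v, w) := by
  obtain ⟨e, he, hce⟩ := Finset.mem_image.1 hb
  rw [SimpleGraph.mem_incidenceFinset] at he
  induction e with
  | _ p q =>
    rw [SimpleGraph.mk'_mem_incidenceSet_iff] at he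
    obtain ⟨hadj, h | h⟩ := he
    · exact ⟨q, h ▸ hadj, by rw [← hce, h]⟩
    · exact ⟨p, h ▸ hadj.symm, by rw [← hce, h, Sym2.eq_swap]⟩

lemma palette_mem {G : SimpleGraph V} [DecidableRel G.Adj] {c : Sym2 V → ℕ} {v w : V}
    (h : G.Adj v w) : c s(v, w) ∈ (G.incidenceFinset v).image c := by
  refine Finset.mem_image.2 ⟨s(v, w), ?_, rfl⟩
  rw [SimpleGraph.mem_incidenceFinset]
  exact (G.mem_incidenceSet v w).2 h

lemma colorDegree_le_degree (G : SimpleGraph V) [DecidableRel G.Adj] (c : Sym2 V → ℕ) (v : V) :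
    colorDegree G c v ≤ G.degree v := by
  rw [colorDegree_eq]
  calc ((G.incidenceFinset v).image c).card ≤ (G.incidenceFinset v).card :=
        Finset.card_image_le
    _ = G.degree v := G.card_incidenceFinset_eq_degree v

lemma colorDegree_le_card (G : SimpleGraph V) [DecidableRel G.Adj] (c : Sym2 V → ℕ) (v : V) :
    colorDegree G c v ≤ Fintype.card V - 1 := by
  have := G.degree_lt_card_verts v
  have := colorDegree_le_degree G c v
  omega



lemma sum_degree_sq_le (G : SimpleGraph V) [DecidableRel G.Adj]
    (hC4 : ¬ ∃ a b d e : V, a ≠ b ∧ a ≠ d ∧ a ≠ e ∧ b ≠ d ∧ b ≠ e ∧ d ≠ e ∧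
      G.Adj a b ∧ G.Adj b d ∧ G.Adj d e ∧ G.Adj e a) :
    ∑ v, G.degree v * G.degree v ≤
      Fintype.card V * Fintype.card V + ∑ v, G.degree v := by
  set n := Fintype.card V
  have hpt : ∀ v, G.degree v * G.degree v ≤ G.degree v * (G.degree v - 1) + G.degree v := by
    intro v; cases G.degree v with
    | zero => simp
    | succ t => simp [Nat.succ_sub_one]; ring_nf; omega
  have hmain : ∑ v, G.degree v * (G.degree v - 1) ≤ n * n := by
    have hcard : ∀ v : V, ((G.neighborFinset v).offDiag).card
        = G.degree v * (G.degree v - 1) := by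
      intro v
      rw [Finset.offDiag_card, SimpleGraph.card_neighborFinset_eq_degree]
      cases G.degree v with
      | zero => simp
      | succ t => simp [Nat.succ_sub_one]; ring_nf; omega
    have hdisj : ∀ v ∈ (univ : Finset V), ∀ w ∈ (univ : Finset V), v ≠ w →
        Disjoint ((G.neighborFinset v).offDiag) ((G.neighborFinset w).offDiag) := by
      intro v _ w _ hvw
      rw [Finset.disjoint_left]
      rintro ⟨p, q⟩ hp hq
      rw [Finset.mem_offDiag] at hp hq
      obtain ⟨hp1, hp2, hpq⟩ := hp
      obtain ⟨hq1, hq2, _⟩ := hq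
      rw [SimpleGraph.mem_neighborFinset] at hp1 hp2 hq1 hq2
      exact hC4 ⟨p, v, q, w, (G.ne_of_adj hp1).symm, hpq, (G.ne_of_adj hq1).symm,
        G.ne_of_adj hp2, hvw, (G.ne_of_adj hq2).symm,
        hp1.symm, hp2, hq2.symm, hq1⟩
    calc ∑ v, G.degree v * (G.degree v - 1)
        = ∑ v ∈ univ, ((G.neighborFinset v).offDiag).card := by
          exact (Finset.sum_congr rfl fun v _ => (hcard v).symm)
      _ = (univ.biUnion (fun v => (G.neighborFinset v).offDiag)).card :=
          (Finset.card_biUnion hdisj).symm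
      _ ≤ ((univ : Finset V) ×ˢ (univ : Finset V)).card := by
          apply Finset.card_le_card
          intro p hp
          simp [Finset.mem_product]
      _ = n * n := by rw [Finset.card_product]; simp [n]
  calc ∑ v, G.degree v * G.degree v
      ≤ ∑ v, (G.degree v * (G.degree v - 1) + G.degree v) :=
        Finset.sum_le_sum fun v _ => hpt v
    _ = ∑ v, G.degree v * (G.degree v - 1) + ∑ v, G.degree v := Finset.sum_add_distrib
    _ ≤ n * n + ∑ v, G.degree v := by omega

lemma exists_light_edge (G : SimpleGraph V) [DecidableRel G.Adj] (K : ℕ) (hK : 3 ≤ K)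
    (hn : 0 < Fintype.card V)
    (hsq : ∑ v, G.degree v * G.degree v ≤
      Fintype.card V * Fintype.card V + ∑ v, G.degree v)
    (hD : 2 * K * Fintype.card V ≤ ∑ v, G.degree v) :
    ∃ x y, G.Adj x y ∧ 2 * (G.degree x + G.degree y) + 2 ≤ Fintype.card V + 4 * K := by
  set n := Fintype.card V with hndef
  set D := ∑ v, G.degree v with hDdef
  by_contra hcon
  push_neg at hcon
  have hpair : ∀ x y, G.Adj x y → n + 4 * K ≤ 2 * (G.degree x + G.degree y) + 1 := by
    intro x y hxy
    have := hcon x y hxy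
    omega
  -- double sum identities
  have hswap : ∑ v, ∑ u ∈ G.neighborFinset v, G.degree u = ∑ v, G.degree v * G.degree v := by
    have h1 : ∀ v, ∑ u ∈ G.neighborFinset v, G.degree u
        = ∑ u, if G.Adj v u then G.degree u else 0 := by
      intro v
      rw [SimpleGraph.neighborFinset_eq_filter, Finset.sum_filter]
    simp_rw [h1]
    rw [Finset.sum_comm]
    apply Finset.sum_congr rfl
    intro u _
    have h2 : ∀ v, (if G.Adj v u then G.degree u else 0)
        = (if u ∈ G.neighborFinset v then G.degree u else 0) := by
      intro v; simp [SimpleGraph.mem_neighborFinset]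
    calc ∑ v, (if G.Adj v u then G.degree u else 0)
        = ∑ v ∈ univ.filter (fun v => G.Adj v u), G.degree u := by
          rw [Finset.sum_filter]
      _ = (univ.filter (fun v => G.Adj v u)).card * G.degree u := by
          rw [Finset.sum_const, smul_eq_mul]
      _ = G.degree u * G.degree u := by
          congr 1
          have : univ.filter (fun v => G.Adj v u) = G.neighborFinset u := by
            ext v; simp [SimpleGraph.mem_neighborFinset, G.adj_comm]
          rw [this, SimpleGraph.card_neighborFinset_eq_degree]
  have hself : ∑ v, ∑ u ∈ G.neighborFinset v, G.degree v = ∑ v, G.degree v * G.degree v := by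
    apply Finset.sum_congr rfl
    intro v _
    rw [Finset.sum_const, smul_eq_mul, SimpleGraph.card_neighborFinset_eq_degree, Nat.mul_comm]
  have hlow : (n + 4 * K) * D ≤ ∑ v, ∑ u ∈ G.neighborFinset v, (2 * (G.degree v + G.degree u) + 1) := by
    calc (n + 4 * K) * D = ∑ v, (G.degree v) * (n + 4 * K) := by
          rw [← Finset.sum_mul, hDdef, Nat.mul_comm]
      _ = ∑ v, ∑ u ∈ G.neighborFinset v, (n + 4 * K) := by
          apply Finset.sum_congr rfl
          intro v _
          rw [Finset.sum_const, smul_eq_mul, SimpleGraph.card_neighborFinset_eq_degree]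
      _ ≤ _ := by
          apply Finset.sum_le_sum; intro v _
          apply Finset.sum_le_sum; intro u hu
          exact hpair v u ((SimpleGraph.mem_neighborFinset G v u).1 hu)
  have hup : ∑ v, ∑ u ∈ G.neighborFinset v, (2 * (G.degree v + G.degree u) + 1)
      = 4 * (∑ v, G.degree v * G.degree v) + D := by
    have : ∀ v, ∑ u ∈ G.neighborFinset v, (2 * (G.degree v + G.degree u) + 1)
        = 2 * (∑ u ∈ G.neighborFinset v, G.degree v) +
          2 * (∑ u ∈ G.neighborFinset v, G.degree u) + G.degree v := by
      intro v
      rw [← SimpleGraph.card_neighborFinset_eq_degree]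
      simp [Finset.sum_add_distrib, Finset.mul_sum, mul_add]
      ring
    simp_rw [this]
    rw [Finset.sum_add_distrib, Finset.sum_add_distrib, ← Finset.mul_sum, ← Finset.mul_sum,
      hswap, hself]
    omega
  rw [hup] at hlow
  -- final arithmetic contradiction
  have hA : (n + 4 * K) * D ≤ 4 * (n * n) + 5 * D := by omega
  have h6 : 6 * n ≤ D := le_trans (by nlinarith) hD
  have h12 : (n + 12) * D ≤ (n + 4 * K) * D :=
    Nat.mul_le_mul_right D (by omega)
  have h8 : (n + 7) * D ≤ 4 * (n * n) := by nlinarith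
  have h9 : (n + 7) * (6 * n) ≤ (n + 7) * D := Nat.mul_le_mul_left _ h6
  nlinarith

end Helpers

section Helpers2
variable {V : Type*} [Fintype V] [DecidableEq V]
lemma colorDegree_le_of_ports (G : SimpleGraph V) [DecidableRel G.Adj] (c : Sym2 V → ℕ)
    (v : V) (T : Finset ℕ) (h : ∀ w, G.Adj v w → c s(v, w) ∈ T) :
    colorDegree G c v ≤ T.card := by
  rw [colorDegree_eq]
  apply Finset.card_le_card
  intro b hb
  obtain ⟨w, hw, rfl⟩ := mem_palette hb
  exact h w hw

lemma rainbow_singleton {G : SimpleGraph V} {c : Sym2 V → ℕ} {x y : V} (hxy : G.Adj x y) :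
    IsRainbowMatching G c {s(x, y)} ∧ ({s(x, y)} : Finset (Sym2 V)).card = 1 := by
  refine ⟨⟨?_, ?_, ?_⟩, Finset.card_singleton _⟩
  · intro e he
    simp only [Finset.coe_singleton, Set.mem_singleton_iff] at he
    rw [he]
    exact hxy
  · intro e he f hf hef
    rw [Finset.mem_singleton] at he hf
    exact absurd (he.trans hf.symm) hef
  · rw [Finset.coe_singleton]
    exact Set.injOn_singleton _ _

lemma rainbow_pair {G : SimpleGraph V} {c : Sym2 V → ℕ} {p q r t : V}
    (hpq : G.Adj p q) (hrt : G.Adj r t) (hpr : p ≠ r) (hpt : p ≠ t) (hqr : q ≠ r)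
    (hqt : q ≠ t) (hc : c s(p, q) ≠ c s(r, t)) :
    IsRainbowMatching G c {s(p, q), s(r, t)} ∧ ({s(p, q), s(r, t)} : Finset (Sym2 V)).card = 2 := by
  have hne : s(p, q) ≠ s(r, t) := fun h => hc (by rw [h])
  have hmem : ∀ v : V, v ∈ s(p, q) → v ∉ s(r, t) := by
    intro v hv hv'
    rw [Sym2.mem_iff] at hv hv'
    rcases hv with rfl | rfl <;> rcases hv' with rfl | rfl <;> simp_all
  constructor
  · refine ⟨?_, ?_, ?_⟩
    · intro e he
      simp only [Finset.coe_insert, Finset.coe_singleton, Set.mem_insert_iff,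
        Set.mem_singleton_iff] at he
      rcases he with rfl | rfl
      · exact hpq
      · exact hrt
    · intro e he f hf hef v hv
      simp only [Finset.mem_insert, Finset.mem_singleton] at he hf
      rcases he with rfl | rfl <;> rcases hf with rfl | rfl
      · exact absurd rfl hef
      · exact fun h => hmem v hv h
      · exact fun h => hmem v h hv
      · exact absurd rfl hef
    · intro e he f hf hcef
      simp only [Finset.coe_insert, Finset.coe_singleton, Set.mem_insert_iff,
        Set.mem_singleton_iff] at he hf
      rcases he with rfl | rfl <;> rcases hf with rfl | rfl
      · rfl
      · exact absurd hcef hc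
      · exact absurd hcef.symm hc
      · rfl
  · rw [Finset.card_insert_of_notMem (by simpa using hne), Finset.card_singleton]

lemma base_one (G : SimpleGraph V) [DecidableRel G.Adj] (c : Sym2 V → ℕ)
    (hn : 0 < Fintype.card V) (hsum : 2 * 1 * Fintype.card V ≤ ∑ v, colorDegree G c v) :
    ∃ M : Finset (Sym2 V), IsRainbowMatching G c M ∧ M.card = 1 := by
  have hpos : ∃ v, 0 < colorDegree G c v := by
    by_contra h
    push_neg at h
    have : ∑ v, colorDegree G c v = 0 := Finset.sum_eq_zero fun v _ => by
      have := h v; omega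
    omega
  obtain ⟨v, hv⟩ := hpos
  rw [colorDegree_eq] at hv
  obtain ⟨b, hb⟩ := Finset.card_pos.1 hv
  obtain ⟨w, hw, -⟩ := mem_palette hb
  exact ⟨_, rainbow_singleton hw⟩
lemma base_two (G : SimpleGraph V) [DecidableRel G.Adj] (c : Sym2 V → ℕ)
    (hn : 0 < Fintype.card V) (hsum : 2 * 2 * Fintype.card V ≤ ∑ v, colorDegree G c v) :
    ∃ M : Finset (Sym2 V), IsRainbowMatching G c M ∧ M.card = 2 := by
  set n := Fintype.card V with hndef
  by_contra hcon
  have key : ∀ p q r t : V, G.Adj p q → G.Adj r t → p ≠ r → p ≠ t → q ≠ r → q ≠ t →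
      c s(p, q) = c s(r, t) := by
    intro p q r t hpq hrt hpr hpt hqr hqt
    by_contra hc
    exact hcon ⟨_, rainbow_pair hpq hrt hpr hpt hqr hqt hc⟩
  by_cases hdisj : ∃ p q r t : V, G.Adj p q ∧ G.Adj r t ∧ p ≠ r ∧ p ≠ t ∧ q ≠ r ∧ q ≠ t
  · -- Case A : two disjoint edges exist; every colour degree ≤ 3
    obtain ⟨p, q, r, t, hpq, hrt, hpr, hpt, hqr, hqt⟩ := hdisj
    set a := c s(p, q) with hadef
    have hart : c s(r, t) = a := (key p q r t hpq hrt hpr hpt hqr hqt).symm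
    have sub : ∀ (v r' t' : V), G.Adj r' t' → v ≠ r' → v ≠ t' → c s(r', t') = a →
        colorDegree G c v ≤ 3 := by
      intro v r' t' hrt' hvr hvt hceq
      set T : Finset ℕ := insert a (insert (c s(v, r')) ({c s(v, t')} : Finset ℕ)) with hT
      have h3 : colorDegree G c v ≤ T.card := by
        apply colorDegree_le_of_ports
        intro w hw
        by_cases hwr : w = r'
        · subst hwr; simp [hT]
        · by_cases hwt : w = t'
          · subst hwt; simp [hT]
          · have : c s(v, w) = c s(r', t') := key v w r' t' hw hrt' hvr hvt hwr hwt
            rw [hT]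
            rw [this, hceq]
            simp
      have hTcard : T.card ≤ 3 := by
        apply le_trans (Finset.card_insert_le _ _)
        have h2 : (insert (c s(v, r')) ({c s(v, t')} : Finset ℕ)).card ≤ 2 := by
          apply le_trans (Finset.card_insert_le _ _)
          simp
        omega
      omega
    have hcd : ∀ v : V, colorDegree G c v ≤ 3 := by
      intro v
      by_cases hvr : v = r
      · subst hvr
        exact sub _ p q hpq (Ne.symm hpr) (Ne.symm hqr) rfl
      · by_cases hvt : v = t
        · subst hvt
          exact sub _ p q hpq (Ne.symm hpt) (Ne.symm hqt) rfl
        · exact sub v r t hrt hvr hvt hart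
    have hle : ∑ v, colorDegree G c v ≤ n * 3 := by
      calc ∑ v, colorDegree G c v ≤ ∑ _v : V, 3 := Finset.sum_le_sum fun v _ => hcd v
        _ = n * 3 := by rw [Finset.sum_const, smul_eq_mul, Finset.card_univ]
    omega
  · -- Case B : any two edges intersect
    push_neg at hdisj
    by_cases hE : ∃ x y : V, G.Adj x y
    · obtain ⟨a0, b0, hab⟩ := hE
      by_cases hstar : ∃ v0 : V, ∀ w z : V, G.Adj w z → v0 = w ∨ v0 = z
      · -- star case
        obtain ⟨v0, hv0⟩ := hstar
        have hcd : ∀ v : V, v ≠ v0 → colorDegree G c v ≤ 1 := by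
          intro v hv
          have h1 : colorDegree G c v ≤ ({c s(v, v0)} : Finset ℕ).card := by
            apply colorDegree_le_of_ports
            intro w hw
            rcases hv0 v w hw with h | h
            · exact absurd h.symm hv
            · rw [← h]; simp
          simpa using h1
        have hsplit : ∑ v ∈ univ.erase v0, colorDegree G c v + colorDegree G c v0
            = ∑ v, colorDegree G c v := Finset.sum_erase_add _ _ (Finset.mem_univ v0)
        have hcarderase : (univ.erase v0).card = n - 1 := by
          rw [Finset.card_erase_of_mem (Finset.mem_univ v0), Finset.card_univ]
        have h1 : ∑ v ∈ univ.erase v0, colorDegree G c v ≤ (univ.erase v0).card • 1 := by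
          apply Finset.sum_le_card_nsmul
          intro v hv
          exact hcd v (Finset.ne_of_mem_erase hv)
        rw [hcarderase, smul_eq_mul] at h1
        have h2 : colorDegree G c v0 ≤ n - 1 := colorDegree_le_card G c v0
        omega
      · -- triangle case
        push_neg at hstar
        obtain ⟨p, q, hpq2, hap, haq⟩ := hstar a0
        have hb0 : b0 = p ∨ b0 = q := by
          by_cases h : b0 = p
          · exact Or.inl h
          · exact Or.inr (hdisj a0 b0 p q hab hpq2 hap haq h)
        obtain ⟨c0, hbc, hc0a⟩ : ∃ c0, G.Adj b0 c0 ∧ c0 ≠ a0 := by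
          rcases hb0 with rfl | rfl
          · exact ⟨q, hpq2, haq.symm⟩
          · exact ⟨p, hpq2.symm, hap.symm⟩
        obtain ⟨r, s, hrs, hbr, hbs⟩ := hstar b0
        have har : a0 = r ∨ a0 = s := by
          by_cases h : a0 = r
          · exact Or.inl h
          · exact Or.inr (hdisj b0 a0 r s hab.symm hrs hbr hbs h)
        have hcr : c0 = r ∨ c0 = s := by
          by_cases h : c0 = r
          · exact Or.inl h
          · exact Or.inr (hdisj b0 c0 r s hbc hrs hbr hbs h)
        have hac : G.Adj a0 c0 := by
          rcases har with rfl | rfl <;> rcases hcr with h | h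
          · exact absurd h hc0a
          · rw [h]; exact hrs
          · rw [h]; exact hrs.symm
          · exact absurd h hc0a
        have hab' := G.ne_of_adj hab
        have hbc' := G.ne_of_adj hbc
        have hac' := G.ne_of_adj hac
        have htri : ∀ w z : V, G.Adj w z → (w = a0 ∨ w = b0 ∨ w = c0) := by
          intro w z hwz
          by_contra h
          push_neg at h
          obtain ⟨hwa, hwb, hwc⟩ := h
          have h1 : z = a0 ∨ z = b0 := by
            by_cases hz : z = a0
            · exact Or.inl hz
            · exact Or.inr (hdisj w z a0 b0 hwz hab hwa hwb hz)
          have h2 : z = b0 ∨ z = c0 := by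
            by_cases hz : z = b0
            · exact Or.inl hz
            · exact Or.inr (hdisj w z b0 c0 hwz hbc hwb hwc hz)
          have h3 : z = a0 ∨ z = c0 := by
            by_cases hz : z = a0
            · exact Or.inl hz
            · exact Or.inr (hdisj w z a0 c0 hwz hac hwa hwc hz)
          rcases h1 with h1' | h1' <;> rcases h2 with h2' | h2' <;>
            rcases h3 with h3' | h3' <;> simp_all
        have hports : ∀ v : V, (v = a0 ∨ v = b0 ∨ v = c0) →
            ∃ z1 z2 : V, ∀ w, G.Adj v w → w = z1 ∨ w = z2 := by
          intro v hv
          have hgen : ∀ w, G.Adj v w → (w = a0 ∨ w = b0 ∨ w = c0) ∧ w ≠ v := by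
            intro w hw
            exact ⟨htri w v hw.symm, (G.ne_of_adj hw).symm⟩
          rcases hv with rfl | rfl | rfl
          · refine ⟨b0, c0, fun w hw => ?_⟩
            obtain ⟨h1, h2⟩ := hgen w hw
            rcases h1 with h | h | h
            · exact absurd h h2
            · exact Or.inl h
            · exact Or.inr h
          · refine ⟨a0, c0, fun w hw => ?_⟩
            obtain ⟨h1, h2⟩ := hgen w hw
            rcases h1 with h | h | h
            · exact Or.inl h
            · exact absurd h h2
            · exact Or.inr h
          · refine ⟨a0, b0, fun w hw => ?_⟩
            obtain ⟨h1, h2⟩ := hgen w hw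
            rcases h1 with h | h | h
            · exact Or.inl h
            · exact Or.inr h
            · exact absurd h h2
        have hcd : ∀ v : V, colorDegree G c v ≤ if v = a0 ∨ v = b0 ∨ v = c0 then 2 else 0 := by
          intro v
          by_cases hv : v = a0 ∨ v = b0 ∨ v = c0
          · rw [if_pos hv]
            obtain ⟨z1, z2, hz⟩ := hports v hv
            have h1 : colorDegree G c v
                ≤ (insert (c s(v, z1)) ({c s(v, z2)} : Finset ℕ)).card := by
              apply colorDegree_le_of_ports
              intro w hw
              rcases hz w hw with rfl | rfl <;> simp
            have h2 : (insert (c s(v, z1)) ({c s(v, z2)} : Finset ℕ)).card ≤ 2 := by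
              apply le_trans (Finset.card_insert_le _ _)
              simp
            omega
          · rw [if_neg hv]
            have h1 : colorDegree G c v ≤ (∅ : Finset ℕ).card := by
              apply colorDegree_le_of_ports
              intro w hw
              exact absurd (htri v w hw) hv
            simpa using h1
        have hsum6 : ∑ v, colorDegree G c v ≤ 6 := by
          have hcard3 : ({a0, b0, c0} : Finset V).card ≤ 3 := by
            apply le_trans (Finset.card_insert_le _ _)
            have : ({b0, c0} : Finset V).card ≤ 2 := by
              apply le_trans (Finset.card_insert_le _ _)
              simp
            omega
          calc ∑ v, colorDegree G c v
              ≤ ∑ v, if v = a0 ∨ v = b0 ∨ v = c0 then 2 else 0 :=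
                Finset.sum_le_sum fun v _ => hcd v
            _ = ∑ v ∈ univ.filter (fun v => v = a0 ∨ v = b0 ∨ v = c0), 2 :=
                (Finset.sum_filter _ _).symm
            _ = (univ.filter (fun v => v = a0 ∨ v = b0 ∨ v = c0)).card * 2 := by
                rw [Finset.sum_const, smul_eq_mul]
            _ ≤ ({a0, b0, c0} : Finset V).card * 2 := by
                apply Nat.mul_le_mul_right
                apply Finset.card_le_card
                intro v hv
                simp only [Finset.mem_filter] at hv
                simp only [Finset.mem_insert, Finset.mem_singleton]
                exact hv.2
            _ ≤ 6 := by omega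
        have hn3 : 3 ≤ n := by
          have hcard : ({a0, b0, c0} : Finset V).card = 3 := by
            rw [Finset.card_insert_of_notMem (by simp [hab', hac']),
              Finset.card_insert_of_notMem (by simp [hbc'])]
            simp
          calc 3 = ({a0, b0, c0} : Finset V).card := hcard.symm
            _ ≤ n := by rw [hndef, ← Finset.card_univ]; exact Finset.card_le_univ _
        omega
    · push_neg at hE
      have hcd : ∀ v : V, colorDegree G c v = 0 := by
        intro v
        have h1 : colorDegree G c v ≤ (∅ : Finset ℕ).card := by
          apply colorDegree_le_of_ports
          intro w hw
          exact absurd hw (hE v w)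
        simpa using h1
      have : ∑ v, colorDegree G c v = 0 := Finset.sum_eq_zero fun v _ => hcd v
      omega

end Helpers2

lemma step_lemma (k : ℕ) (hk : 2 ≤ k)
    (IH : ∀ (W : Type u) [Fintype W] (G' : SimpleGraph W) (c' : Sym2 W → ℕ),
      (¬ ∃ a b d e : W, a ≠ b ∧ a ≠ d ∧ a ≠ e ∧ b ≠ d ∧ b ≠ e ∧ d ≠ e ∧
        G'.Adj a b ∧ G'.Adj b d ∧ G'.Adj d e ∧ G'.Adj e a) →
      0 < Fintype.card W → 2 * k * Fintype.card W ≤ ∑ w, colorDegree G' c' w →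
      ∃ M : Finset (Sym2 W), IsRainbowMatching G' c' M ∧ M.card = k)
    (V : Type u) [Fintype V] (G : SimpleGraph V) (c : Sym2 V → ℕ)
    (hC4 : ¬ ∃ a b d e : V, a ≠ b ∧ a ≠ d ∧ a ≠ e ∧ b ≠ d ∧ b ≠ e ∧ d ≠ e ∧
      G.Adj a b ∧ G.Adj b d ∧ G.Adj d e ∧ G.Adj e a)
    (hn : 0 < Fintype.card V)
    (hsum : 2 * (k + 1) * Fintype.card V ≤ ∑ v, colorDegree G c v) :
    ∃ M : Finset (Sym2 V), IsRainbowMatching G c M ∧ M.card = k + 1 := by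
  classical
  set n := Fintype.card V with hndef
  set K := k + 1 with hKdef
  have hK3 : 3 ≤ K := by omega
  have hdegsum : 2 * K * n ≤ ∑ v, G.degree v :=
    le_trans hsum (Finset.sum_le_sum fun v _ => colorDegree_le_degree G c v)
  have hn7 : 7 ≤ n := by
    have hdeg : ∀ v : V, G.degree v ≤ n - 1 := fun v => by
      have := G.degree_lt_card_verts v; omega
    have h1 : ∑ v, G.degree v ≤ n * (n - 1) := by
      calc ∑ v, G.degree v ≤ ∑ _v : V, (n - 1) := Finset.sum_le_sum fun v _ => hdeg v
        _ = n * (n - 1) := by rw [Finset.sum_const, smul_eq_mul, Finset.card_univ]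
    have h2 : 2 * K * n ≤ n * (n - 1) := le_trans hdegsum h1
    by_contra hcon
    push_neg at hcon
    interval_cases n <;> omega
  -- find a light edge
  obtain ⟨x, y, hxy, hlight⟩ := exists_light_edge G K hK3 hn (sum_degree_sq_le G hC4) hdegsum
  have hxyne : x ≠ y := G.ne_of_adj hxy
  set a := c s(x, y) with hadef
  -- the reduced graph on V' = V \ {x, y}, with colour a removed
  let G' : SimpleGraph {v : V // v ≠ x ∧ v ≠ y} :=
    { Adj := fun u w => G.Adj u.1 w.1 ∧ c s(u.1, w.1) ≠ a,
      symm := by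
        refine ⟨fun u w h => ?_⟩
        exact ⟨h.1.symm, by rw [Sym2.eq_swap]; exact h.2⟩,
      loopless := ⟨fun u h => G.loopless.irrefl u.1 h.1⟩ }
  let c' : Sym2 {v : V // v ≠ x ∧ v ≠ y} → ℕ := fun e => c (e.map Subtype.val)
  have hc'pair : ∀ u w : {v : V // v ≠ x ∧ v ≠ y}, c' s(u, w) = c s(u.1, w.1) := by
    intro u w
    show c (Sym2.map Subtype.val s(u, w)) = c s(u.1, w.1)
    rw [Sym2.map_pair_eq]
  -- cardinality of the subtype
  set F : Finset V := univ.filter (fun v => v ≠ x ∧ v ≠ y) with hFdef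
  have hFsd : F = univ \ {x, y} := by
    ext v; simp [hFdef]
  have hFcard : F.card = n - 2 := by
    rw [hFsd, Finset.card_sdiff_of_subset (Finset.subset_univ _), Finset.card_univ]
    congr 1
    rw [Finset.card_insert_of_notMem (by simpa using hxyne), Finset.card_singleton]
  have hcardV' : Fintype.card {v : V // v ≠ x ∧ v ≠ y} = n - 2 := by
    rw [Fintype.card_subtype]
    exact hFcard
  -- sums over the subtype vs sums over F
  have hconv : ∀ f : V → ℕ, ∑ u : {v : V // v ≠ x ∧ v ≠ y}, f u.1 = ∑ v ∈ F, f v := by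
    intro f
    exact (Finset.sum_subtype F (by simp [hFdef]) f).symm
  -- per-vertex colour-degree drop bound
  have hdrop : ∀ u : {v : V // v ≠ x ∧ v ≠ y}, colorDegree G c u.1 ≤ colorDegree G' c' u
      + ((if G.Adj u.1 x then 1 else 0) + (if G.Adj u.1 y then 1 else 0) + 1) := by
    intro u
    rw [colorDegree_eq G c u.1, colorDegree_eq G' c' u]
    set T : Finset ℕ := ((if G.Adj u.1 x then ({c s(u.1, x)} : Finset ℕ) else ∅)
      ∪ (if G.Adj u.1 y then ({c s(u.1, y)} : Finset ℕ) else ∅) ∪ ({a} : Finset ℕ)) with hT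
    have hsub : (G.incidenceFinset u.1).image c ⊆ ((G'.incidenceFinset u).image c') ∪ T := by
      intro b hb
      obtain ⟨w, hw, rfl⟩ := mem_palette hb
      rw [Finset.mem_union]
      by_cases hba : c s(u.1, w) = a
      · right; rw [hT]; simp [hba]
      · by_cases hwx : w = x
        · right; rw [hT]; subst hwx; simp [hw]
        · by_cases hwy : w = y
          · right; rw [hT]; subst hwy; simp [hw]
          · left
            have hadj' : G'.Adj u ⟨w, hwx, hwy⟩ := ⟨hw, hba⟩
            have := palette_mem (G := G') (c := c') hadj'
            rwa [hc'pair] at this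
    have hTcard : T.card ≤ (if G.Adj u.1 x then 1 else 0) + (if G.Adj u.1 y then 1 else 0) + 1 := by
      rw [hT]
      apply le_trans (Finset.card_union_le _ _)
      have h1 : ((if G.Adj u.1 x then ({c s(u.1, x)} : Finset ℕ) else ∅)
          ∪ (if G.Adj u.1 y then ({c s(u.1, y)} : Finset ℕ) else ∅)).card
          ≤ (if G.Adj u.1 x then 1 else 0) + (if G.Adj u.1 y then 1 else 0) := by
        apply le_trans (Finset.card_union_le _ _)
        apply Nat.add_le_add <;> split <;> simp
      simp only [Finset.card_singleton]
      omega
    calc ((G.incidenceFinset u.1).image c).card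
        ≤ (((G'.incidenceFinset u).image c') ∪ T).card := Finset.card_le_card hsub
      _ ≤ ((G'.incidenceFinset u).image c').card + T.card := Finset.card_union_le _ _
      _ ≤ _ := by omega
  -- summing the drop bound
  have hsum1 : ∑ v ∈ F, colorDegree G c v + (colorDegree G c x + colorDegree G c y)
      = ∑ v, colorDegree G c v := by
    rw [hFsd]
    rw [← Finset.sum_sdiff (Finset.subset_univ ({x, y} : Finset V))]
    congr 1
    rw [Finset.sum_pair hxyne]
  have hsum2 : ∑ u : {v : V // v ≠ x ∧ v ≠ y}, colorDegree G c u.1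
      ≤ (∑ u : {v : V // v ≠ x ∧ v ≠ y}, colorDegree G' c' u)
        + (G.degree x + G.degree y + (n - 2)) := by
    have h0 : ∑ u : {v : V // v ≠ x ∧ v ≠ y}, colorDegree G c u.1
        ≤ ∑ u : {v : V // v ≠ x ∧ v ≠ y}, (colorDegree G' c' u
          + ((if G.Adj u.1 x then 1 else 0) + (if G.Adj u.1 y then 1 else 0) + 1)) :=
      Finset.sum_le_sum fun u _ => hdrop u
    have hx1 : ∑ u : {v : V // v ≠ x ∧ v ≠ y}, (if G.Adj u.1 x then 1 else 0) ≤ G.degree x := by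
      rw [hconv (fun v => if G.Adj v x then 1 else 0)]
      calc ∑ v ∈ F, (if G.Adj v x then 1 else 0)
          ≤ ∑ v, (if G.Adj v x then 1 else 0) :=
            Finset.sum_le_sum_of_subset (Finset.subset_univ F)
        _ = (univ.filter (fun v => G.Adj v x)).card := (Finset.card_filter _ _).symm
        _ = G.degree x := by
            have : univ.filter (fun v => G.Adj v x) = G.neighborFinset x := by
              ext v; simp [SimpleGraph.mem_neighborFinset, G.adj_comm]
            rw [this, SimpleGraph.card_neighborFinset_eq_degree]
    have hy1 : ∑ u : {v : V // v ≠ x ∧ v ≠ y}, (if G.Adj u.1 y then 1 else 0) ≤ G.degree y := by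
      rw [hconv (fun v => if G.Adj v y then 1 else 0)]
      calc ∑ v ∈ F, (if G.Adj v y then 1 else 0)
          ≤ ∑ v, (if G.Adj v y then 1 else 0) :=
            Finset.sum_le_sum_of_subset (Finset.subset_univ F)
        _ = (univ.filter (fun v => G.Adj v y)).card := (Finset.card_filter _ _).symm
        _ = G.degree y := by
            have : univ.filter (fun v => G.Adj v y) = G.neighborFinset y := by
              ext v; simp [SimpleGraph.mem_neighborFinset, G.adj_comm]
            rw [this, SimpleGraph.card_neighborFinset_eq_degree]
    have hone : ∑ _u : {v : V // v ≠ x ∧ v ≠ y}, 1 = n - 2 := by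
      rw [Finset.sum_const, smul_eq_mul, mul_one, Finset.card_univ, hcardV']
    calc ∑ u : {v : V // v ≠ x ∧ v ≠ y}, colorDegree G c u.1
        ≤ _ := h0
      _ = (∑ u : {v : V // v ≠ x ∧ v ≠ y}, colorDegree G' c' u)
          + ((∑ u : {v : V // v ≠ x ∧ v ≠ y}, (if G.Adj u.1 x then 1 else 0))
            + (∑ u : {v : V // v ≠ x ∧ v ≠ y}, (if G.Adj u.1 y then 1 else 0))
            + (∑ _u : {v : V // v ≠ x ∧ v ≠ y}, 1)) := by
          rw [← Finset.sum_add_distrib, ← Finset.sum_add_distrib, ← Finset.sum_add_distrib]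
      _ ≤ _ := by
          rw [hone]
          omega
  -- the recursive hypothesis bound
  have hS' : 2 * k * (n - 2) ≤ ∑ u : {v : V // v ≠ x ∧ v ≠ y}, colorDegree G' c' u := by
    have hcdx : colorDegree G c x ≤ G.degree x := colorDegree_le_degree G c x
    have hcdy : colorDegree G c y ≤ G.degree y := colorDegree_le_degree G c y
    have hsubsum : ∑ u : {v : V // v ≠ x ∧ v ≠ y}, colorDegree G c u.1
        = ∑ v ∈ F, colorDegree G c v := hconv _
    set S' := ∑ u : {v : V // v ≠ x ∧ v ≠ y}, colorDegree G' c' u with hS'def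
    have hbig : 2 * K * n ≤ S' + 2 * (G.degree x + G.degree y) + (n - 2) := by
      have := hsum2
      rw [hsubsum] at this
      omega
    have hid : 2 * k * (n - 2) + 4 * k = 2 * k * n := by
      have h2 : n - 2 + 2 = n := by omega
      calc 2 * k * (n - 2) + 4 * k = 2 * k * ((n - 2) + 2) := by ring
        _ = 2 * k * n := by rw [h2]
    have hexp : 2 * K * n = 2 * k * n + 2 * n := by rw [hKdef]; ring
    have hl : 2 * (G.degree x + G.degree y) + 2 ≤ n + 4 * K := hlight
    have h4K : 4 * K = 4 * k + 4 := by rw [hKdef]; ring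
    -- linear arithmetic with atoms 2*k*n, 2*k*(n-2), S'
    have hn2 : 2 ≤ n := by omega
    have hm : n - 2 + 2 = n := by omega
    linarith
  have hC4' : ¬ ∃ a' b' d' e' : {v : V // v ≠ x ∧ v ≠ y},
      a' ≠ b' ∧ a' ≠ d' ∧ a' ≠ e' ∧ b' ≠ d' ∧ b' ≠ e' ∧ d' ≠ e' ∧
      G'.Adj a' b' ∧ G'.Adj b' d' ∧ G'.Adj d' e' ∧ G'.Adj e' a' := by
    rintro ⟨p, q, r, s, h1, h2, h3, h4, h5, h6, h7, h8, h9, h10⟩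
    exact hC4 ⟨p.1, q.1, r.1, s.1,
      fun h => h1 (Subtype.ext h), fun h => h2 (Subtype.ext h), fun h => h3 (Subtype.ext h),
      fun h => h4 (Subtype.ext h), fun h => h5 (Subtype.ext h), fun h => h6 (Subtype.ext h),
      h7.1, h8.1, h9.1, h10.1⟩
  have hn' : 0 < Fintype.card {v : V // v ≠ x ∧ v ≠ y} := by
    rw [hcardV']; omega
  obtain ⟨M', hM'rb, hM'card⟩ := IH {v : V // v ≠ x ∧ v ≠ y} G' c' hC4' hn' (by
    rw [hcardV']; exact hS')
  -- lift the matching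
  set emap : Sym2 {v : V // v ≠ x ∧ v ≠ y} → Sym2 V := Sym2.map Subtype.val with hemap
  have hinj : Function.Injective emap := Sym2.map.injective Subtype.val_injective
  have hlift : ∀ e : Sym2 {v : V // v ≠ x ∧ v ≠ y}, e ∈ G'.edgeSet →
      emap e ∈ G.edgeSet ∧ c (emap e) ≠ a := by
    intro e he
    induction e with
    | _ u w =>
      rw [SimpleGraph.mem_edgeSet] at he
      constructor
      · rw [hemap, Sym2.map_pair_eq, SimpleGraph.mem_edgeSet]
        exact he.1
      · rw [hemap, Sym2.map_pair_eq]
        exact he.2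
  have hmemlift : ∀ (e : Sym2 {v : V // v ≠ x ∧ v ≠ y}) (v : V), v ∈ emap e →
      v ≠ x ∧ v ≠ y := by
    intro e v hv
    rw [hemap, Sym2.mem_map] at hv
    obtain ⟨w, _, rfl⟩ := hv
    exact w.2
  set M : Finset (Sym2 V) := insert s(x, y) (M'.image emap) with hM
  have hxy_not_mem : s(x, y) ∉ M'.image emap := by
    intro h
    obtain ⟨e', _, he'⟩ := Finset.mem_image.1 h
    have : x ∈ emap e' := by rw [he']; exact Sym2.mem_mk_left x y
    exact (hmemlift e' x this).1 rfl
  refine ⟨M, ⟨?_, ?_, ?_⟩, ?_⟩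
  · -- subset of edge set
    intro e he
    rw [Finset.mem_coe, hM, Finset.mem_insert] at he
    rcases he with rfl | he
    · rw [SimpleGraph.mem_edgeSet]; exact hxy
    · obtain ⟨e', he', rfl⟩ := Finset.mem_image.1 he
      exact (hlift e' (hM'rb.1 (Finset.mem_coe.2 he'))).1
  · -- pairwise disjoint
    intro e he f hf hef v hv hvf
    rw [hM, Finset.mem_insert] at he hf
    rcases he with rfl | he <;> rcases hf with rfl | hf
    · exact hef rfl
    · obtain ⟨f', hf', rfl⟩ := Finset.mem_image.1 hf
      rw [Sym2.mem_iff] at hv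
      rcases hv with rfl | rfl
      · exact (hmemlift f' v hvf).1 rfl
      · exact (hmemlift f' v hvf).2 rfl
    · obtain ⟨e', he', rfl⟩ := Finset.mem_image.1 he
      rw [Sym2.mem_iff] at hvf
      rcases hvf with rfl | rfl
      · exact (hmemlift e' v hv).1 rfl
      · exact (hmemlift e' v hv).2 rfl
    · obtain ⟨e', he', rfl⟩ := Finset.mem_image.1 he
      obtain ⟨f', hf', rfl⟩ := Finset.mem_image.1 hf
      have hne' : e' ≠ f' := fun h => hef (by rw [h])
      rw [hemap, Sym2.mem_map] at hv hvf
      obtain ⟨w1, hw1, hw1v⟩ := hv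
      obtain ⟨w2, hw2, hw2v⟩ := hvf
      have : w1 = w2 := Subtype.val_injective (hw1v.trans hw2v.symm)
      subst this
      exact hM'rb.2.1 e' he' f' hf' hne' w1 hw1 hw2
  · -- injectivity of colours
    intro e he f hf hcef
    rw [Finset.mem_coe, hM, Finset.mem_insert] at he hf
    have hc'eq : ∀ e' ∈ M', c (emap e') = c' e' := fun e' _ => rfl
    rcases he with rfl | he <;> rcases hf with rfl | hf
    · rfl
    · obtain ⟨f', hf', rfl⟩ := Finset.mem_image.1 hf
      exact absurd hcef.symm (hlift f' (hM'rb.1 (Finset.mem_coe.2 hf'))).2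
    · obtain ⟨e', he', rfl⟩ := Finset.mem_image.1 he
      exact absurd hcef (hlift e' (hM'rb.1 (Finset.mem_coe.2 he'))).2
    · obtain ⟨e', he', rfl⟩ := Finset.mem_image.1 he
      obtain ⟨f', hf', rfl⟩ := Finset.mem_image.1 hf
      have : c' e' = c' f' := by
        rw [← hc'eq e' he', ← hc'eq f' hf']; exact hcef
      have := hM'rb.2.2 (Finset.mem_coe.2 he') (Finset.mem_coe.2 hf') this
      rw [this]
  · -- cardinality
    rw [hM, Finset.card_insert_of_notMem hxy_not_mem,
      Finset.card_image_of_injective _ hinj, hM'card]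

theorem rb_aux : ∀ (k : ℕ) (V : Type u) [Fintype V] (G : SimpleGraph V) (c : Sym2 V → ℕ),
    (¬ ∃ a b d e : V, a ≠ b ∧ a ≠ d ∧ a ≠ e ∧ b ≠ d ∧ b ≠ e ∧ d ≠ e ∧
      G.Adj a b ∧ G.Adj b d ∧ G.Adj d e ∧ G.Adj e a) →
    0 < Fintype.card V →
    2 * k * Fintype.card V ≤ ∑ v, colorDegree G c v →
    ∃ M : Finset (Sym2 V), IsRainbowMatching G c M ∧ M.card = k := by
  intro k
  induction k with
  | zero =>
    intro V _ G c _ _ _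
    exact ⟨∅, ⟨by simp, by simp, by simp⟩, rfl⟩
  | succ k IH =>
    intro V _ G c hC4 hn hsum
    classical
    rcases Nat.lt_or_ge k 2 with hk | hk
    · interval_cases k
      · exact base_one G c hn (by simpa using hsum)
      · exact base_two G c hn (by simpa using hsum)
    · exact step_lemma k hk IH V G c hC4 hn hsum

end RainbowMatchingAux

/-- Kritschgau: every `C₄`-free edge-colored graph with average color degree at least
`2k` contains a rainbow matching of size `k`. -/
theorem rainbow_matching_C4_free_avg_color_degree
    {V : Type*} [Fintype V] (k : ℕ) (hk : 1 ≤ k)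
    (G : SimpleGraph V) (c : Sym2 V → ℕ)
    (hC4 : ¬ ∃ a b d e : V, a ≠ b ∧ a ≠ d ∧ a ≠ e ∧ b ≠ d ∧ b ≠ e ∧ d ≠ e ∧
      G.Adj a b ∧ G.Adj b d ∧ G.Adj d e ∧ G.Adj e a)
    (havg : (2 * (k : ℚ)) ≤ (∑ v, (colorDegree G c v : ℚ)) / (Fintype.card V : ℚ)) :
    ∃ M : Finset (Sym2 V), IsRainbowMatching G c M ∧ M.card = k := by
  classical
  have hk1 : (1 : ℚ) ≤ (k : ℚ) := by exact_mod_cast hk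
  have hn : 0 < Fintype.card V := by
    by_contra h
    push_neg at h
    have h0 : Fintype.card V = 0 := by omega
    rw [h0] at havg
    simp at havg
    linarith
  have hpos : (0 : ℚ) < (Fintype.card V : ℚ) := by exact_mod_cast hn
  have hq : (2 * (k : ℚ)) * (Fintype.card V : ℚ) ≤ ∑ v, (colorDegree G c v : ℚ) :=
    (le_div_iff₀ hpos).1 havg
  have hsum : 2 * k * Fintype.card V ≤ ∑ v, colorDegree G c v := by
    have hcast : ((2 * k * Fintype.card V : ℕ) : ℚ) ≤ ((∑ v, colorDegree G c v : ℕ) : ℚ) := by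
      push_cast
      linarith
    exact_mod_cast hcast
  exact RainbowMatchingAux.rb_aux k V G c hC4 hn hsum
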